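/- Structure Theorem of the Laplacian Kernel (STLK): Let N = (S, C, R) be a chemical reaction network with terminal strong linkage classes C^1, C^2, ..., C^t. Then for every positive rate vector k ∈ ℝ^R_{>0}, the kernel of the Laplacian map A_k has a basis b^1, b^2, ..., b^t such that supp(b^i) = C^i for all i = 1, 2, ..., t. In particular, dim Ker A_k = t and every element of Ker A_k has its support contained in the set of terminal complexes. -/

import Mathlib

open scoped BigOperators Classical

/-- A chemical reaction network (CRN) on a finite species set `S`:
complexes are non-negative vectors in `ℝ^S`, reactions are pairs of complexes,
no reaction is a self-loop, and every complex occurs in some reaction. -/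
structure CRN (S : Type*) [Fintype S] where
  complexes : Finset (S → ℝ)
  reactions : Finset ((S → ℝ) × (S → ℝ))
  complexes_nonneg : ∀ y ∈ complexes, ∀ i, 0 ≤ y i
  mem_source : ∀ r ∈ reactions, r.1 ∈ complexes
  mem_target : ∀ r ∈ reactions, r.2 ∈ complexes
  ne_of_mem : ∀ r ∈ reactions, r.1 ≠ r.2
  cover : ∀ y ∈ complexes, ∃ y', (y, y') ∈ reactions ∨ (y', y) ∈ reactions

namespace CRN

variable {S : Type*} [Fintype S] (N : CRN S)

/-- One-step reaction relation on complexes. -/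
def step (y y' : S → ℝ) : Prop := (y, y') ∈ N.reactions

/-- Reachability along directed reactions. -/
def reach : (S → ℝ) → (S → ℝ) → Prop := Relation.ReflTransGen N.step

/-- A complex is terminal iff it belongs to a terminal strong linkage class,
i.e. everything reachable from it can reach it back. -/
def IsTerminal (y : S → ℝ) : Prop :=
  y ∈ N.complexes ∧ ∀ y', N.reach y y' → N.reach y' y

/-- A nonterminal complex. -/
def Nonterminal (y : S → ℝ) : Prop := y ∈ N.complexes ∧ ¬ N.IsTerminal y

/-- The set of terminal strong linkage classes. -/
def tslc : Set (Set (S → ℝ)) :=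
  {L | ∃ y, N.IsTerminal y ∧ L = {y' | N.reach y y' ∧ N.reach y' y}}

/-- The number `t` of terminal strong linkage classes. -/
noncomputable def numTSLC : ℕ := Nat.card N.tslc

/-- Undirected connectivity (for linkage classes). -/
def linked : (S → ℝ) → (S → ℝ) → Prop :=
  Relation.ReflTransGen (fun a b => (a, b) ∈ N.reactions ∨ (b, a) ∈ N.reactions)

/-- The set of linkage classes (connected components of the reaction digraph). -/
def linkageClasses : Set (Set (S → ℝ)) :=
  {L | ∃ y ∈ N.complexes, L = {y' | y' ∈ N.complexes ∧ N.linked y y'}}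

/-- The number `ℓ` of linkage classes. -/
noncomputable def numLinkageClasses : ℕ := Nat.card N.linkageClasses

/-- The stoichiometric subspace `S = span{y' - y : y → y'}`. -/
def stoichSubspace : Submodule ℝ (S → ℝ) :=
  Submodule.span ℝ {v | ∃ r ∈ N.reactions, v = r.2 - r.1}

/-- The rank `s` of the network. -/
noncomputable def rank : ℕ := Module.finrank ℝ N.stoichSubspace

/-- The deficiency `δ = n - ℓ - s`. -/
noncomputable def deficiency : ℤ :=
  (N.complexes.card : ℤ) - N.numLinkageClasses - N.rank

/-- The map of complexes `Y : ℝ^C → ℝ^S`, sending `ω_y ↦ y`. -/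
noncomputable def mapY : (↥N.complexes → ℝ) →ₗ[ℝ] (S → ℝ) :=
  ∑ y : ↥N.complexes, (LinearMap.proj y).smulRight (y : S → ℝ)

/-- The incidence map `I_a : ℝ^R → ℝ^C`, sending `ω_{y→y'} ↦ ω_{y'} - ω_y`. -/
noncomputable def incidence : (↥N.reactions → ℝ) →ₗ[ℝ] (↥N.complexes → ℝ) :=
  ∑ r : ↥N.reactions,
    (LinearMap.proj r).smulRight
      (Pi.single (⟨r.1.2, N.mem_target r.1 r.2⟩ : ↥N.complexes) 1
        - Pi.single (⟨r.1.1, N.mem_source r.1 r.2⟩ : ↥N.complexes) 1)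

/-- The Laplacian map `A_k x = Σ_{y→y'} k_{y→y'} x_y (ω_{y'} - ω_y)`. -/
noncomputable def laplacian (k : ↥N.reactions → ℝ) :
    (↥N.complexes → ℝ) →ₗ[ℝ] (↥N.complexes → ℝ) :=
  ∑ r : ↥N.reactions, k r •
    ((LinearMap.proj (⟨r.1.1, N.mem_source r.1 r.2⟩ : ↥N.complexes)).smulRight
      (Pi.single (⟨r.1.2, N.mem_target r.1 r.2⟩ : ↥N.complexes) 1
        - Pi.single (⟨r.1.1, N.mem_source r.1 r.2⟩ : ↥N.complexes) 1))

/-- A positive equilibrium of the PL-RDK system with rate constants `k` and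
kinetic-order assignment (T-matrix) `T`. -/
def IsPosEquilibrium (k : ↥N.reactions → ℝ) (T : (S → ℝ) → (S → ℝ)) (c : S → ℝ) : Prop :=
  (∀ i, 0 < c i) ∧
    ∑ r : ↥N.reactions, (k r * ∏ i, (c i) ^ (T r.1.1 i)) • ((r.1.2 : S → ℝ) - r.1.1) = 0

/-- The set of reactant complexes. -/
def reactantSet : Set (S → ℝ) := {y | ∃ y', (y, y') ∈ N.reactions}

/-- The reactant subspace `R = Im Y_res`. -/
def reactantSubspace : Submodule ℝ (S → ℝ) := Submodule.span ℝ N.reactantSet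

/-- The reactant deficiency `δ_ρ = n_r - q`. -/
noncomputable def reactantDeficiency : ℤ :=
  (Nat.card N.reactantSet : ℤ) - Module.finrank ℝ N.reactantSubspace

/-! ### Auxiliary development for STLK -/

/-- Source of a reaction, as an element of the complex type. -/
def rsrc (r : ↥N.reactions) : ↥N.complexes := ⟨r.1.1, N.mem_source r.1 r.2⟩

/-- Target of a reaction, as an element of the complex type. -/
def rtgt (r : ↥N.reactions) : ↥N.complexes := ⟨r.1.2, N.mem_target r.1 r.2⟩

lemma step_rsrc_rtgt (r : ↥N.reactions) : N.step ↑(N.rsrc r) ↑(N.rtgt r) := by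
  show (r.1.1, r.1.2) ∈ N.reactions
  rw [Prod.mk.eta]
  exact r.2

lemma lap_apply (k : ↥N.reactions → ℝ) (x : ↥N.complexes → ℝ) (z : ↥N.complexes) :
    N.laplacian k x z = ∑ r : ↥N.reactions, k r * (x (N.rsrc r) *
      ((if z = N.rtgt r then (1:ℝ) else 0) - (if z = N.rsrc r then (1:ℝ) else 0))) := by
  simp [laplacian, rsrc, rtgt, LinearMap.smulRight_apply, Pi.single_apply,
    Finset.sum_apply, mul_sub]
  refine congrArg₂ _ (Finset.sum_congr rfl fun r _ => ?_) (Finset.sum_congr rfl fun r _ => ?_) <;>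
    split_ifs with h <;> simp [h]

lemma sum_lap (k : ↥N.reactions → ℝ) (x : ↥N.complexes → ℝ) (U : Finset ↥N.complexes) :
    ∑ z ∈ U, N.laplacian k x z = ∑ r : ↥N.reactions, k r * (x (N.rsrc r) *
      ((if N.rtgt r ∈ U then (1:ℝ) else 0) - (if N.rsrc r ∈ U then (1:ℝ) else 0))) := by
  rw [Finset.sum_congr rfl fun z _ => N.lap_apply k x z, Finset.sum_comm]
  refine Finset.sum_congr rfl fun r _ => ?_
  rw [← Finset.mul_sum, ← Finset.mul_sum, Finset.sum_sub_distrib,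
    Finset.sum_ite_eq' U (N.rtgt r) (fun _ => (1:ℝ)),
    Finset.sum_ite_eq' U (N.rsrc r) (fun _ => (1:ℝ))]

lemma col_sum (k : ↥N.reactions → ℝ) (x : ↥N.complexes → ℝ) :
    ∑ z : ↥N.complexes, N.laplacian k x z = 0 := by
  rw [sum_lap]
  simp

lemma key {k : ↥N.reactions → ℝ} (hk : ∀ r, 0 < k r) {x : ↥N.complexes → ℝ}
    (hx : N.laplacian k x = 0) (U : Finset ↥N.complexes)
    (h1 : ∀ r, N.rsrc r ∉ U → N.rtgt r ∈ U → x (N.rsrc r) ≤ 0)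
    (h2 : ∀ r, N.rsrc r ∈ U → 0 ≤ x (N.rsrc r)) :
    ∀ r, (N.rsrc r ∈ U → N.rtgt r ∉ U → x (N.rsrc r) = 0) ∧
         (N.rsrc r ∉ U → N.rtgt r ∈ U → x (N.rsrc r) = 0) := by
  have hsum : ∑ r : ↥N.reactions, k r * (x (N.rsrc r) *
      ((if N.rtgt r ∈ U then (1:ℝ) else 0) - (if N.rsrc r ∈ U then (1:ℝ) else 0))) = 0 := by
    rw [← sum_lap, hx]
    simp
  have hterm : ∀ r ∈ (Finset.univ : Finset ↥N.reactions), k r * (x (N.rsrc r) *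
      ((if N.rtgt r ∈ U then (1:ℝ) else 0) - (if N.rsrc r ∈ U then (1:ℝ) else 0))) ≤ 0 := by
    intro r _
    by_cases hs : N.rsrc r ∈ U <;> by_cases ht : N.rtgt r ∈ U <;>
      simp only [hs, ht, if_true, if_false]
    · simp
    · have h := h2 r hs
      nlinarith [(hk r).le]
    · have h := h1 r hs ht
      nlinarith [(hk r).le]
    · simp
  have hzero := (Finset.sum_eq_zero_iff_of_nonpos hterm).mp hsum
  intro r
  have hz := hzero r (Finset.mem_univ r)
  constructor
  · intro hs ht
    rw [if_pos hs, if_neg ht] at hz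
    rcases mul_eq_zero.mp hz with h | h
    · exact absurd h (ne_of_gt (hk r))
    · nlinarith [h]
  · intro hs ht
    rw [if_neg hs, if_pos ht] at hz
    rcases mul_eq_zero.mp hz with h | h
    · exact absurd h (ne_of_gt (hk r))
    · nlinarith [h]

lemma restrict_ker {k : ↥N.reactions → ℝ} {x : ↥N.complexes → ℝ}
    (hx : N.laplacian k x = 0) (U : Finset ↥N.complexes)
    (hfwd : ∀ r, N.rsrc r ∈ U → N.rtgt r ∈ U)
    (hin : ∀ r, N.rsrc r ∉ U → N.rtgt r ∈ U → x (N.rsrc r) = 0) :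
    N.laplacian k (fun z => if z ∈ U then x z else 0) = 0 := by
  funext z
  by_cases hz : z ∈ U
  · have heq : N.laplacian k (fun z => if z ∈ U then x z else 0) z = N.laplacian k x z := by
      rw [lap_apply, lap_apply]
      refine Finset.sum_congr rfl fun r _ => ?_
      by_cases hs : N.rsrc r ∈ U
      · rw [if_pos hs]
      · rw [if_neg hs]
        by_cases htz : z = N.rtgt r
        · simp [hin r hs (htz ▸ hz)]
        · have hzs : z ≠ N.rsrc r := by rintro rfl; exact hs hz
          rw [if_neg htz, if_neg hzs]
          ring
    rw [heq, hx]
  · rw [lap_apply]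
    refine Finset.sum_eq_zero fun r _ => ?_
    by_cases hs : N.rsrc r ∈ U
    · have h1 : z ≠ N.rtgt r := by rintro rfl; exact hz (hfwd r hs)
      have h2 : z ≠ N.rsrc r := by rintro rfl; exact hz hs
      rw [if_neg h1, if_neg h2]
      ring
    · rw [if_neg hs]
      ring

/-- The positive part of a vector. -/
noncomputable def posPart (x : ↥N.complexes → ℝ) : ↥N.complexes → ℝ :=
  fun z => if 0 < x z then x z else 0

lemma posPart_nonneg (x : ↥N.complexes → ℝ) (z : ↥N.complexes) : 0 ≤ N.posPart x z := by
  unfold posPart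
  split
  · linarith
  · rfl

lemma posPart_ker {k : ↥N.reactions → ℝ} (hk : ∀ r, 0 < k r) {x : ↥N.complexes → ℝ}
    (hx : N.laplacian k x = 0) : N.laplacian k (N.posPart x) = 0 := by
  set U : Finset ↥N.complexes := Finset.univ.filter (fun z => 0 < x z) with hU
  have hmem : ∀ z, z ∈ U ↔ 0 < x z := by
    intro z; simp [hU]
  have hkey := N.key hk hx U
    (fun r hs _ => le_of_not_gt fun h => hs ((hmem _).mpr h))
    (fun r hs => le_of_lt ((hmem _).mp hs))
  have hfwd : ∀ r, N.rsrc r ∈ U → N.rtgt r ∈ U := by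
    intro r hs
    by_contra ht
    exact absurd ((hkey r).1 hs ht) (ne_of_gt ((hmem _).mp hs))
  have hres := N.restrict_ker hx U hfwd (fun r hs ht => (hkey r).2 hs ht)
  have heq : (fun z => if z ∈ U then x z else 0) = N.posPart x := by
    funext z
    simp only [hmem, posPart]
  rwa [heq] at hres

lemma pos_step {k : ↥N.reactions → ℝ} (hk : ∀ r, 0 < k r) {x : ↥N.complexes → ℝ}
    (hx : N.laplacian k x = 0) (hnn : ∀ z, 0 ≤ x z) (r : ↥N.reactions)
    (hs : 0 < x (N.rsrc r)) : 0 < x (N.rtgt r) := by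
  set U : Finset ↥N.complexes := Finset.univ.filter (fun z => 0 < x z) with hU
  have hmem : ∀ z, z ∈ U ↔ 0 < x z := by
    intro z; simp [hU]
  have hkey := N.key hk hx U
    (fun r hs _ => le_of_not_gt fun h => hs ((hmem _).mpr h))
    (fun r hs => le_of_lt ((hmem _).mp hs))
  by_contra ht
  have ht' : N.rtgt r ∉ U := fun h => ht ((hmem _).mp h)
  exact absurd ((hkey r).1 ((hmem _).mpr hs) ht') (ne_of_gt hs)

lemma reach_mem {y y' : S → ℝ} (hy : y ∈ N.complexes) (h : N.reach y y') :
    y' ∈ N.complexes := by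
  induction h with
  | refl => exact hy
  | tail _ hstep _ => exact N.mem_target _ hstep

lemma pos_reach {k : ↥N.reactions → ℝ} (hk : ∀ r, 0 < k r) {x : ↥N.complexes → ℝ}
    (hx : N.laplacian k x = 0) (hnn : ∀ z, 0 ≤ x z) {z : ↥N.complexes} (hz : 0 < x z)
    {y' : S → ℝ} (h : N.reach ↑z y') : ∃ h' : y' ∈ N.complexes, 0 < x ⟨y', h'⟩ := by
  induction h with
  | refl => exact ⟨z.2, by simpa using hz⟩
  | @tail b c hab hstep ih =>
      obtain ⟨hb, hbpos⟩ := ih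
      have hr : (b, c) ∈ N.reactions := hstep
      refine ⟨N.mem_target _ hr, ?_⟩
      have hps := N.pos_step hk hx hnn ⟨(b, c), hr⟩ (by simpa [rsrc] using hbpos)
      simpa [rtgt] using hps

lemma nonneg_terminal {k : ↥N.reactions → ℝ} (hk : ∀ r, 0 < k r) {x : ↥N.complexes → ℝ}
    (hx : N.laplacian k x = 0) (hnn : ∀ z, 0 ≤ x z) {y : ↥N.complexes}
    (hy : x y ≠ 0) : N.IsTerminal ↑y := by
  have hypos : 0 < x y := (hnn y).lt_of_ne (Ne.symm hy)
  refine ⟨y.2, ?_⟩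
  set U : Finset ↥N.complexes := Finset.univ.filter (fun z => N.reach ↑z ↑y) with hU
  have hmem : ∀ z : ↥N.complexes, z ∈ U ↔ N.reach (↑z) ↑y := by
    intro z; simp [hU]
  have hkey := N.key hk hx U
    (fun r hs ht => absurd ((hmem _).mpr
      ((Relation.ReflTransGen.single (N.step_rsrc_rtgt r)).trans ((hmem _).mp ht))) hs)
    (fun r _ => hnn _)
  intro y' hreach
  induction hreach with
  | refl => exact Relation.ReflTransGen.refl
  | @tail b c hab hstep ih =>
      by_contra hc
      have hr : (b, c) ∈ N.reactions := hstep
      set r : ↥N.reactions := ⟨(b, c), hr⟩ with hrdef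
      have hsU : N.rsrc r ∈ U := (hmem _).mpr (by simpa [rsrc, hrdef] using ih)
      have htU : N.rtgt r ∉ U := fun h => hc (by simpa [rtgt, hrdef] using (hmem _).mp h)
      have hzero : x (N.rsrc r) = 0 := (hkey r).1 hsU htU
      obtain ⟨hb', hbpos⟩ := N.pos_reach hk hx hnn hypos hab
      have hbeq : N.rsrc r = ⟨b, hb'⟩ := Subtype.ext rfl
      rw [hbeq] at hzero
      exact absurd hzero (ne_of_gt hbpos)

lemma pos_part_extract {k : ↥N.reactions → ℝ} (hk : ∀ r, 0 < k r) {x : ↥N.complexes → ℝ}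
    (hx : N.laplacian k x = 0) {w : ↥N.complexes} (hw : x w ≠ 0) :
    ∃ c : ↥N.complexes → ℝ, N.laplacian k c = 0 ∧ (∀ z, 0 ≤ c z) ∧ 0 < c w ∧
      (∀ z : ↥N.complexes, x z = 0 → c z = 0) := by
  rcases lt_or_gt_of_ne hw with hneg | hpos
  · refine ⟨N.posPart (-x), N.posPart_ker hk (by rw [map_neg, hx, neg_zero]),
      N.posPart_nonneg _, ?_, ?_⟩
    · have h0 : 0 < (-x) w := by simpa using hneg
      simp only [posPart]
      rw [if_pos h0]
      exact h0
    · intro z hz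
      simp only [posPart, Pi.neg_apply, hz]
      simp
  · refine ⟨N.posPart x, N.posPart_ker hk hx, N.posPart_nonneg _, ?_, ?_⟩
    · simp only [posPart]
      rw [if_pos hpos]
      exact hpos
    · intro z hz
      simp only [posPart, hz]
      simp

lemma supp_terminal {k : ↥N.reactions → ℝ} (hk : ∀ r, 0 < k r) {x : ↥N.complexes → ℝ}
    (hx : N.laplacian k x = 0) {y : ↥N.complexes} (hy : x y ≠ 0) :
    N.IsTerminal ↑y := by
  obtain ⟨c, hcker, hcnn, hcw, _⟩ := N.pos_part_extract hk hx hy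
  exact N.nonneg_terminal hk hcker hcnn (ne_of_gt hcw)

/-- The strong linkage class of a complex. -/
def clsOf (a : S → ℝ) : Set (S → ℝ) := {y' | N.reach a y' ∧ N.reach y' a}

lemma mem_clsOf_self (a : S → ℝ) : a ∈ N.clsOf a :=
  ⟨Relation.ReflTransGen.refl, Relation.ReflTransGen.refl⟩

lemma isTerminal_of_mem {L : Set (S → ℝ)} {a : S → ℝ} (hL : L ∈ N.tslc) (ha : a ∈ L) :
    N.IsTerminal a := by
  obtain ⟨y, hy, rfl⟩ := hL
  obtain ⟨h1, h2⟩ := ha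
  refine ⟨N.reach_mem hy.1 h1, fun y' h => ?_⟩
  exact (hy.2 _ (h1.trans h)).trans h1

lemma clsOf_eq_of_mem {L : Set (S → ℝ)} {a : S → ℝ} (hL : L ∈ N.tslc) (ha : a ∈ L) :
    L = N.clsOf a := by
  obtain ⟨y, hy, rfl⟩ := hL
  obtain ⟨h1, h2⟩ := ha
  ext z
  constructor
  · rintro ⟨g1, g2⟩
    exact ⟨h2.trans g1, g2.trans h1⟩
  · rintro ⟨g1, g2⟩
    exact ⟨h1.trans g1, g2.trans h2⟩

lemma clsOf_mem_tslc {a : S → ℝ} (ha : N.IsTerminal a) : N.clsOf a ∈ N.tslc :=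
  ⟨a, ha, rfl⟩

lemma tslc_subset_complexes {L : Set (S → ℝ)} (hL : L ∈ N.tslc) :
    L ⊆ (↑N.complexes : Set (S → ℝ)) := by
  obtain ⟨y, hy, rfl⟩ := hL
  intro z hz
  exact N.reach_mem hy.1 hz.1

lemma tslc_nonempty {L : Set (S → ℝ)} (hL : L ∈ N.tslc) :
    ∃ z : ↥N.complexes, (z : S → ℝ) ∈ L := by
  obtain ⟨y, hy, rfl⟩ := hL
  exact ⟨⟨y, hy.1⟩, N.mem_clsOf_self y⟩

lemma tslc_eq_of_mem_mem {L L' : Set (S → ℝ)} (hL : L ∈ N.tslc) (hL' : L' ∈ N.tslc)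
    {a : S → ℝ} (ha : a ∈ L) (ha' : a ∈ L') : L = L' := by
  rw [N.clsOf_eq_of_mem hL ha, N.clsOf_eq_of_mem hL' ha']

lemma step_mem_class {L : Set (S → ℝ)} (hL : L ∈ N.tslc) {a a' : S → ℝ}
    (ha : a ∈ L) (hstep : N.step a a') : a' ∈ L := by
  have hterm := N.isTerminal_of_mem hL ha
  have h1 : N.reach a a' := Relation.ReflTransGen.single hstep
  rw [N.clsOf_eq_of_mem hL ha]
  exact ⟨h1, hterm.2 _ h1⟩

lemma reach_of_mem_mem {L : Set (S → ℝ)} (hL : L ∈ N.tslc) {a a' : S → ℝ}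
    (ha : a ∈ L) (ha' : a' ∈ L) : N.reach a a' := by
  rw [N.clsOf_eq_of_mem hL ha] at ha'
  exact ha'.1

lemma tslc_finite : N.tslc.Finite := by
  refine Set.Finite.subset (Set.Finite.finite_subsets N.complexes.finite_toSet) ?_
  intro L hL
  exact N.tslc_subset_complexes hL

lemma indicator_class_ker {k : ↥N.reactions → ℝ} (hk : ∀ r, 0 < k r)
    {x : ↥N.complexes → ℝ} (hx : N.laplacian k x = 0) {L : Set (S → ℝ)}
    (hL : L ∈ N.tslc) :
    N.laplacian k (fun z => if (z : S → ℝ) ∈ L then x z else 0) = 0 := by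
  set U : Finset ↥N.complexes := Finset.univ.filter (fun z => (z : S → ℝ) ∈ L) with hU
  have hmem : ∀ z : ↥N.complexes, z ∈ U ↔ (z : S → ℝ) ∈ L := by
    intro z; simp [hU]
  have hfwd : ∀ r, N.rsrc r ∈ U → N.rtgt r ∈ U := by
    intro r hs
    exact (hmem _).mpr (N.step_mem_class hL ((hmem _).mp hs) (N.step_rsrc_rtgt r))
  have hin : ∀ r, N.rsrc r ∉ U → N.rtgt r ∈ U → x (N.rsrc r) = 0 := by
    intro r hs ht
    by_contra hxs
    have hterm : N.IsTerminal ↑(N.rsrc r) := N.supp_terminal hk hx hxs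
    have h1 : N.reach ↑(N.rsrc r) ↑(N.rtgt r) :=
      Relation.ReflTransGen.single (N.step_rsrc_rtgt r)
    have h2 : N.reach ↑(N.rtgt r) ↑(N.rsrc r) := hterm.2 _ h1
    have hmemL : (↑(N.rsrc r) : S → ℝ) ∈ L := by
      rw [N.clsOf_eq_of_mem hL ((hmem _).mp ht)]
      exact ⟨h2, h1⟩
    exact hs ((hmem _).mpr hmemL)
  have hres := N.restrict_ker hx U hfwd hin
  have heq : (fun z => if z ∈ U then x z else 0)
      = (fun z : ↥N.complexes => if (z : S → ℝ) ∈ L then x z else 0) := by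
    funext z
    simp only [hmem]
  rwa [heq] at hres

/-- Functions supported on `L`, as a submodule. -/
def suppSub (L : Set (S → ℝ)) : Submodule ℝ (↥N.complexes → ℝ) where
  carrier := {x | ∀ z : ↥N.complexes, (z : S → ℝ) ∉ L → x z = 0}
  add_mem' := by
    intro a b ha hb z hz
    simp [ha z hz, hb z hz]
  zero_mem' := by
    intro z hz
    rfl
  smul_mem' := by
    intro c a ha z hz
    simp [ha z hz]

lemma pos_on_class {k : ↥N.reactions → ℝ} (hk : ∀ r, 0 < k r) {c : ↥N.complexes → ℝ}
    (hcker : N.laplacian k c = 0) (hcnn : ∀ z, 0 ≤ c z) {L : Set (S → ℝ)}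
    (hL : L ∈ N.tslc) {w : ↥N.complexes} (hwL : (w : S → ℝ) ∈ L) (hcw : 0 < c w)
    {z : ↥N.complexes} (hzL : (z : S → ℝ) ∈ L) : 0 < c z := by
  have hreach : N.reach ↑w ↑z := N.reach_of_mem_mem hL hwL hzL
  obtain ⟨h', hp⟩ := N.pos_reach hk hcker hcnn hcw hreach
  have hzz : (⟨(z : S → ℝ), h'⟩ : ↥N.complexes) = z := Subtype.ext rfl
  rwa [hzz] at hp

lemma exists_basis_vec {k : ↥N.reactions → ℝ} (hk : ∀ r, 0 < k r) {L : Set (S → ℝ)}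
    (hL : L ∈ N.tslc) :
    ∃ b : ↥N.complexes → ℝ, N.laplacian k b = 0 ∧
      (∀ z : ↥N.complexes, 0 < b z ↔ (z : S → ℝ) ∈ L) ∧
      (∀ z : ↥N.complexes, (z : S → ℝ) ∉ L → b z = 0) := by
  have hmap : ∀ x ∈ N.suppSub L, N.laplacian k x ∈ N.suppSub L := by
    intro x hxV z hz
    rw [lap_apply]
    refine Finset.sum_eq_zero fun r _ => ?_
    by_cases hxs : x (N.rsrc r) = 0
    · rw [hxs]; ring
    · have hsL : (↑(N.rsrc r) : S → ℝ) ∈ L := by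
        by_contra h
        exact hxs (hxV _ h)
      have htL : (↑(N.rtgt r) : S → ℝ) ∈ L := N.step_mem_class hL hsL (N.step_rsrc_rtgt r)
      have h1 : z ≠ N.rtgt r := by rintro rfl; exact hz htL
      have h2 : z ≠ N.rsrc r := by rintro rfl; exact hz hsL
      rw [if_neg h1, if_neg h2]
      ring
  set g : ↥(N.suppSub L) →ₗ[ℝ] ↥(N.suppSub L) := (N.laplacian k).restrict hmap with hg
  obtain ⟨z0, hz0⟩ := N.tslc_nonempty hL
  have hv0mem : (fun z : ↥N.complexes => if z = z0 then (1:ℝ) else 0) ∈ N.suppSub L := by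
    intro z hz
    exact if_neg (by rintro rfl; exact hz hz0)
  have hns : ¬ Function.Surjective g := by
    intro hsurj
    obtain ⟨w, hw⟩ := hsurj ⟨_, hv0mem⟩
    have hcoe : N.laplacian k (w : ↥N.complexes → ℝ)
        = (fun z : ↥N.complexes => if z = z0 then (1:ℝ) else 0) := by
      have h := congrArg Subtype.val hw
      simpa [hg, LinearMap.restrict_apply] using h
    have h0 : ∑ z : ↥N.complexes, (if z = z0 then (1:ℝ) else 0) = 0 := by
      rw [← hcoe]
      exact N.col_sum k _
    rw [Finset.sum_ite_eq' Finset.univ z0 (fun _ => (1:ℝ))] at h0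
    simp at h0
  have hni : ¬ Function.Injective g := fun h =>
    hns ((LinearMap.injective_iff_surjective).mp h)
  have hker : LinearMap.ker g ≠ ⊥ := by
    intro h
    exact hni (LinearMap.ker_eq_bot.mp h)
  obtain ⟨v, hvker, hvne⟩ := Submodule.exists_mem_ne_zero_of_ne_bot hker
  have hvlap : N.laplacian k (v : ↥N.complexes → ℝ) = 0 := by
    have h := congrArg Subtype.val (LinearMap.mem_ker.mp hvker)
    simpa [hg, LinearMap.restrict_apply] using h
  have hvsupp : ∀ z : ↥N.complexes, (z : S → ℝ) ∉ L → (v : ↥N.complexes → ℝ) z = 0 :=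
    v.2
  have hvfne : (v : ↥N.complexes → ℝ) ≠ 0 := fun h => hvne (Subtype.ext h)
  obtain ⟨w, hw⟩ := Function.ne_iff.mp hvfne
  obtain ⟨c, hcker, hcnn, hcw, hcz⟩ := N.pos_part_extract hk hvlap (by simpa using hw)
  have hcsupp : ∀ z : ↥N.complexes, (z : S → ℝ) ∉ L → c z = 0 :=
    fun z hz => hcz z (hvsupp z hz)
  have hwL : (w : S → ℝ) ∈ L := by
    by_contra h
    exact absurd (hcsupp w h) (ne_of_gt hcw)
  refine ⟨c, hcker, fun z => ⟨fun h => ?_, fun h => ?_⟩, hcsupp⟩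
  · by_contra hzL
    exact absurd (hcsupp z hzL) (ne_of_gt h)
  · exact N.pos_on_class hk hcker hcnn hL hwL hcw h

lemma eq_zero_of_supported {k : ↥N.reactions → ℝ} (hk : ∀ r, 0 < k r)
    {x : ↥N.complexes → ℝ} (hx : N.laplacian k x = 0) {L : Set (S → ℝ)}
    (hL : L ∈ N.tslc) (hsupp : ∀ z : ↥N.complexes, (z : S → ℝ) ∉ L → x z = 0)
    {z0 : ↥N.complexes} (hz0 : (z0 : S → ℝ) ∈ L) (hx0 : x z0 = 0) : x = 0 := by
  by_contra h
  obtain ⟨w, hw⟩ := Function.ne_iff.mp h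
  have hw' : x w ≠ 0 := by simpa using hw
  obtain ⟨c, hcker, hcnn, hcw, hcz⟩ := N.pos_part_extract hk hx hw'
  have hwL : (w : S → ℝ) ∈ L := by
    by_contra hh
    exact hw' (hsupp w hh)
  have hpos : 0 < c z0 := N.pos_on_class hk hcker hcnn hL hwL hcw hz0
  exact absurd (hcz z0 hx0) (ne_of_gt hpos)

end CRN

/-- **Structure Theorem of the Laplacian Kernel (STLK).**
For every positive rate vector `k`, `Ker A_k` has a basis `b^1, …, b^t` indexed by
the terminal strong linkage classes, with `supp b^i` equal to the i-th terminal
strong linkage class.  In particular `dim Ker A_k = t` and every element of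
`Ker A_k` is supported on terminal complexes. -/
theorem stlk {S : Type*} [Fintype S] (N : CRN S)
    (k : ↥N.reactions → ℝ) (hk : ∀ r, 0 < k r) :
    ∃ b : ↥N.tslc → (↥N.complexes → ℝ),
      LinearIndependent ℝ b ∧
      Submodule.span ℝ (Set.range b) = LinearMap.ker (N.laplacian k) ∧
      (∀ L : ↥N.tslc, ∀ y : ↥N.complexes,
        b L y ≠ 0 ↔ (y : S → ℝ) ∈ (L : Set (S → ℝ))) ∧
      Module.finrank ℝ ↥(LinearMap.ker (N.laplacian k)) = N.numTSLC ∧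
      (∀ x ∈ LinearMap.ker (N.laplacian k),
        ∀ y : ↥N.complexes, x y ≠ 0 → N.IsTerminal (y : S → ℝ)) := by
  classical
  haveI : Fintype ↥N.tslc := N.tslc_finite.fintype
  choose zpt hzpt using fun L : ↥N.tslc => N.tslc_nonempty L.2
  choose b hb1 hb2 hb3 using fun L : ↥N.tslc => N.exists_basis_vec hk L.2
  have hbne : ∀ (L : ↥N.tslc) (y : ↥N.complexes),
      b L y ≠ 0 ↔ (y : S → ℝ) ∈ (L : Set (S → ℝ)) := by
    intro L y
    constructor
    · intro h
      by_contra hy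
      exact h (hb3 L y hy)
    · intro h
      exact ne_of_gt ((hb2 L y).mpr h)
  have hbzpt : ∀ L : ↥N.tslc, 0 < b L (zpt L) := fun L => (hb2 L _).mpr (hzpt L)
  -- linear independence
  have hli : LinearIndependent ℝ b := by
    rw [Fintype.linearIndependent_iff]
    intro c hc L
    have h := congrFun hc (zpt L)
    rw [Finset.sum_apply] at h
    have h' : ∑ L' : ↥N.tslc, c L' * b L' (zpt L) = 0 := by
      simpa using h
    rw [Finset.sum_eq_single L] at h'
    · rcases mul_eq_zero.mp h' with h | h
      · exact h
      · exact absurd h (ne_of_gt (hbzpt L))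
    · intro L' _ hne
      have hz : (↑(zpt L) : S → ℝ) ∉ (L' : Set (S → ℝ)) := by
        intro hmem
        exact hne (Subtype.ext (N.tslc_eq_of_mem_mem L'.2 L.2 hmem (hzpt L)))
      rw [hb3 L' _ hz, mul_zero]
    · intro habs
      exact absurd (Finset.mem_univ L) habs
  -- every kernel element is a combination of the b L
  have hspan : Submodule.span ℝ (Set.range b) = LinearMap.ker (N.laplacian k) := by
    apply le_antisymm
    · rw [Submodule.span_le]
      rintro _ ⟨L, rfl⟩
      exact LinearMap.mem_ker.mpr (hb1 L)
    · intro x hx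
      rw [LinearMap.mem_ker] at hx
      rw [Submodule.mem_span_range_iff_exists_fun]
      refine ⟨fun L => x (zpt L) / b L (zpt L), ?_⟩
      have hrep : ∀ L : ↥N.tslc, ∀ z : ↥N.complexes,
          (x (zpt L) / b L (zpt L)) * b L z
            = if (z : S → ℝ) ∈ (L : Set (S → ℝ)) then x z else 0 := by
        intro L
        have hd : N.laplacian k
            ((fun z : ↥N.complexes =>
                if (z : S → ℝ) ∈ (L : Set (S → ℝ)) then x z else 0)
              - (x (zpt L) / b L (zpt L)) • b L) = 0 := by
          rw [map_sub, map_smul, hb1 L, N.indicator_class_ker hk hx L.2]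
          simp
        have hdsupp : ∀ z : ↥N.complexes, (z : S → ℝ) ∉ (L : Set (S → ℝ)) →
            ((fun z : ↥N.complexes =>
                if (z : S → ℝ) ∈ (L : Set (S → ℝ)) then x z else 0)
              - (x (zpt L) / b L (zpt L)) • b L) z = 0 := by
          intro z hz
          simp [hz, hb3 L z hz]
        have hd0 : ((fun z : ↥N.complexes =>
                if (z : S → ℝ) ∈ (L : Set (S → ℝ)) then x z else 0)
              - (x (zpt L) / b L (zpt L)) • b L) (zpt L) = 0 := by
          have hbne0 : b L (zpt L) ≠ 0 := ne_of_gt (hbzpt L)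
          simp only [Pi.sub_apply, Pi.smul_apply, smul_eq_mul]
          rw [if_pos (hzpt L)]
          field_simp
          ring
        have := N.eq_zero_of_supported hk hd L.2 hdsupp (hzpt L) hd0
        intro z
        have hz := congrFun this z
        simp only [Pi.sub_apply, Pi.smul_apply, smul_eq_mul, Pi.zero_apply] at hz
        linarith
      funext z
      rw [Finset.sum_apply]
      have hterms : ∀ L : ↥N.tslc,
          ((x (zpt L) / b L (zpt L)) • b L) z
            = if (z : S → ℝ) ∈ (L : Set (S → ℝ)) then x z else 0 := by
        intro L
        simpa using hrep L z
      rw [Finset.sum_congr rfl fun L _ => hterms L]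
      by_cases hxz : x z = 0
      · rw [Finset.sum_eq_zero]
        · exact hxz.symm
        · intro L _
          split
          · exact hxz
          · rfl
      · have hterm := N.supp_terminal hk hx hxz
        have hclsmem : N.clsOf ↑z ∈ N.tslc := N.clsOf_mem_tslc hterm
        rw [Finset.sum_eq_single (⟨N.clsOf ↑z, hclsmem⟩ : ↥N.tslc)]
        · rw [if_pos (N.mem_clsOf_self (z : S → ℝ))]
        · intro L' _ hne
          rw [if_neg]
          intro hmem
          exact hne (Subtype.ext (N.tslc_eq_of_mem_mem L'.2 hclsmem hmem
            (N.mem_clsOf_self (z : S → ℝ))))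
        · intro habs
          exact absurd (Finset.mem_univ _) habs
  refine ⟨b, hli, hspan, hbne, ?_, ?_⟩
  · rw [← hspan, finrank_span_eq_card hli, CRN.numTSLC, Nat.card_eq_fintype_card]
  · intro x hx y hy
    exact N.supp_terminal hk (LinearMap.mem_ker.mp hx) hy
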